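/- With b_λ = p⊗p⊗p + λ(p⊗q⊗q + q⊗p⊗q + q⊗q⊗p), p,q orthonormal: if λ ≤ 1/2, then v* = p⊗p⊗p is the unique best rank-one approximation of b_λ; if λ > 1/2, there are exactly two best rank-one approximations, neither equal to p⊗p⊗p, corresponding to α = ±√((2λ−1)/λ). -/

import Mathlib

open scoped BigOperators


private lemma le_of_sq_le_sq' {a b : ℝ} (ha : 0 ≤ a) (hb : 0 ≤ b) (h : a^2 ≤ b^2) : a ≤ b := by
  nlinarith

/-- SOS certificate for `λ ≤ 1/2`. -/
private lemma keyA (lam u v x y : ℝ) (h0 : 0 ≤ lam) (h1 : lam ≤ 1/2) :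
    (u*x + lam*(v*y))^2 + (lam*(u*y + v*x))^2 ≤ (u^2+v^2)*(x^2+y^2) := by
  nlinarith [mul_nonneg (by nlinarith : (0:ℝ) ≤ 1 - lam^2) (sq_nonneg (v*y)),
    mul_nonneg (by linarith : (0:ℝ) ≤ (1+lam)/2) (sq_nonneg (u*y - v*x)),
    mul_nonneg (by nlinarith : (0:ℝ) ≤ (1+lam)*(1-2*lam)/2) (sq_nonneg (u*y + v*x))]

private lemma keyA_eq (lam u v x y : ℝ) (h0 : 0 ≤ lam) (h1 : lam ≤ 1/2)
    (hu : 0 < u^2+v^2) (hx : 0 < x^2+y^2)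
    (heq : (u*x + lam*(v*y))^2 + (lam*(u*y + v*x))^2 = (u^2+v^2)*(x^2+y^2)) :
    v = 0 ∧ y = 0 := by
  have hs : (1 - lam^2)*(v*y)^2 + ((1+lam)/2)*(u*y - v*x)^2
      + ((1+lam)*(1-2*lam)/2)*(u*y + v*x)^2 = 0 := by linear_combination -heq
  have c1 : (0:ℝ) < 1 - lam^2 := by nlinarith
  have q1 : (v*y)^2 ≤ 0 := by
    nlinarith [mul_nonneg (by linarith : (0:ℝ) ≤ (1+lam)/2) (sq_nonneg (u*y - v*x)),
      mul_nonneg (by nlinarith : (0:ℝ) ≤ (1+lam)*(1-2*lam)/2) (sq_nonneg (u*y + v*x)),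
      sq_nonneg (v*y)]
  have hvy : v*y = 0 := by
    have := le_antisymm q1 (sq_nonneg _); exact pow_eq_zero_iff (two_ne_zero) |>.mp this
  have q2 : (u*y - v*x)^2 ≤ 0 := by
    nlinarith [mul_nonneg (by nlinarith : (0:ℝ) ≤ (1+lam)*(1-2*lam)/2) (sq_nonneg (u*y + v*x)),
      mul_nonneg c1.le (sq_nonneg (v*y)), sq_nonneg (u*y - v*x)]
  have hc : u*y = v*x := by
    have := le_antisymm q2 (sq_nonneg _)
    have := pow_eq_zero_iff (two_ne_zero) |>.mp this
    linarith
  rcases mul_eq_zero.mp hvy with hv | hy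
  · -- v = 0
    refine ⟨hv, ?_⟩
    have hu0 : u ≠ 0 := by intro h; rw [h, hv] at hu; simp at hu
    have : u*y = 0 := by rw [hc, hv]; ring
    exact (mul_eq_zero.mp this).resolve_left hu0
  · -- y = 0
    have hx0 : x ≠ 0 := by intro h; rw [h, hy] at hx; simp at hx
    have hvx : v*x = 0 := by rw [← hc, hy]; ring
    exact ⟨(mul_eq_zero.mp hvx).resolve_right hx0, hy⟩

/-- SOS certificate for all λ (tight for λ > 1/2). -/
private lemma keyB (lam u v x y : ℝ) (h1 : 1/2 < lam) :
    (3*lam - 1) * ((u*x + lam*(v*y))^2 + (lam*(u*y + v*x))^2)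
      ≤ 4*lam^3 * ((u^2+v^2)*(x^2+y^2)) := by
  nlinarith [mul_nonneg (by linarith : (0:ℝ) ≤ 1 + lam)
      (sq_nonneg (lam*(v*y) - (2*lam-1)*(u*x))),
    mul_nonneg (mul_nonneg (by linarith : (0:ℝ) ≤ 1 + lam) (sq_nonneg lam))
      (sq_nonneg (u*y - v*x))]

private lemma keyB_eq (lam u v x y : ℝ) (h1 : 1/2 < lam)
    (hu : 0 < u^2+v^2) (hx : 0 < x^2+y^2)
    (heq : (3*lam - 1) * ((u*x + lam*(v*y))^2 + (lam*(u*y + v*x))^2)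
      = 4*lam^3 * ((u^2+v^2)*(x^2+y^2))) :
    ∃ β : ℝ, v = β*u ∧ y = β*x ∧ lam*β^2 = 2*lam - 1 ∧ u ≠ 0 ∧ x ≠ 0 := by
  have hl0 : (0:ℝ) < lam := by linarith
  have hs : (1+lam)*(lam*(v*y) - (2*lam-1)*(u*x))^2
      + (1+lam)*lam^2*(u*y - v*x)^2 = 0 := by linear_combination -heq
  have q1 : (lam*(v*y) - (2*lam-1)*(u*x))^2 ≤ 0 := by
    nlinarith [mul_nonneg (mul_nonneg (by linarith : (0:ℝ) ≤ 1+lam) (sq_nonneg lam))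
      (sq_nonneg (u*y - v*x)), sq_nonneg (lam*(v*y) - (2*lam-1)*(u*x))]
  have hQ3 : lam*(v*y) = (2*lam-1)*(u*x) := by
    have := pow_eq_zero_iff (two_ne_zero) |>.mp (le_antisymm q1 (sq_nonneg _)); linarith
  have q2 : (u*y - v*x)^2 ≤ 0 := by
    nlinarith [mul_nonneg (by linarith : (0:ℝ) ≤ 1+lam)
      (sq_nonneg (lam*(v*y) - (2*lam-1)*(u*x))), sq_nonneg (u*y - v*x),
      mul_pos (mul_pos (by linarith : (0:ℝ) < 1+lam) (mul_pos hl0 hl0)) (mul_pos hl0 hl0)]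
  have hQ4 : u*y = v*x := by
    have := pow_eq_zero_iff (two_ne_zero) |>.mp (le_antisymm q2 (sq_nonneg _)); linarith
  have hu0 : u ≠ 0 := by
    intro h0
    have hvy : v*y = 0 := by
      have : lam*(v*y) = 0 := by rw [hQ3, h0]; ring
      exact (mul_eq_zero.mp this).resolve_left hl0.ne'
    have hv0 : v ≠ 0 := by intro hv; rw [h0, hv] at hu; simp at hu
    have hy0 : y = 0 := (mul_eq_zero.mp hvy).resolve_left hv0
    have hx0 : x = 0 := by
      have : v*x = 0 := by rw [← hQ4, h0]; ring
      exact (mul_eq_zero.mp this).resolve_left hv0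
    rw [hx0, hy0] at hx; simp at hx
  have hx0 : x ≠ 0 := by
    intro h0
    have hvy : v*y = 0 := by
      have : lam*(v*y) = 0 := by rw [hQ3, h0]; ring
      exact (mul_eq_zero.mp this).resolve_left hl0.ne'
    have hy0 : y ≠ 0 := by intro hy; rw [h0, hy] at hx; simp at hx
    have hv0 : v = 0 := (mul_eq_zero.mp hvy).resolve_right hy0
    have hu1 : u = 0 := by
      have : u*y = 0 := by rw [hQ4, hv0]; ring
      exact (mul_eq_zero.mp this).resolve_right hy0
    rw [hu1, hv0] at hu; simp at hu
  refine ⟨v/u, by field_simp, ?_, ?_, hu0, hx0⟩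
  · -- y = (v/u) * x
    field_simp
    linarith [hQ4]
  · -- lam * (v/u)^2 = 2*lam - 1
    have h2 : lam * v^2 = (2*lam-1)*u^2 := by
      have hxx : (lam*v^2 - (2*lam-1)*u^2) * x = 0 := by
        linear_combination u*hQ3 - lam*v*hQ4
      have := (mul_eq_zero.mp hxx).resolve_right hx0
      linarith
    field_simp
    linear_combination h2


/-- Elementary (rank-one) order-3 tensor `u ⊗ v ⊗ w` on `ℝⁿ ⊗ ℝⁿ ⊗ ℝⁿ`. -/
noncomputable def t3 {n : ℕ} (u v w : EuclideanSpace ℝ (Fin n)) :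
    EuclideanSpace ℝ (Fin n × Fin n × Fin n) :=
  WithLp.toLp 2 (fun i : Fin n × Fin n × Fin n => u i.1 * v i.2.1 * w i.2.2)

/-- The tensor `b_λ = p⊗p⊗p + λ(p⊗q⊗q + q⊗p⊗q + q⊗q⊗p)`. -/
noncomputable def bLam {n : ℕ} (p q : EuclideanSpace ℝ (Fin n)) (lam : ℝ) :
    EuclideanSpace ℝ (Fin n × Fin n × Fin n) :=
  t3 p p p + lam • (t3 p q q + t3 q p q + t3 q q p)

private lemma sum3 {n : ℕ} (a b c d e f : Fin n → ℝ) :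
    (∑ i, a i * d i) * (∑ j, b j * e j) * (∑ k, c k * f k)
      = ∑ i, ∑ j, ∑ k, (a i * b j * c k) * (d i * e j * f k) := by
  rw [mul_assoc, Finset.sum_mul]
  refine Finset.sum_congr rfl fun i _ => ?_
  rw [Finset.sum_mul_sum, Finset.mul_sum]
  refine Finset.sum_congr rfl fun j _ => ?_
  rw [Finset.mul_sum]
  refine Finset.sum_congr rfl fun k _ => ?_
  ring

private lemma inner_t3 {n : ℕ} (u₁ u₂ u₃ w₁ w₂ w₃ : EuclideanSpace ℝ (Fin n)) :
    (inner ℝ (t3 u₁ u₂ u₃) (t3 w₁ w₂ w₃) : ℝ)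
      = (inner ℝ u₁ w₁ : ℝ) * (inner ℝ u₂ w₂ : ℝ) * (inner ℝ u₃ w₃ : ℝ) := by
  simp only [PiLp.inner_apply, RCLike.inner_apply, conj_trivial, Fintype.sum_prod_type]
  rw [sum3]
  exact Finset.sum_congr rfl fun i _ => Finset.sum_congr rfl fun j _ =>
    Finset.sum_congr rfl fun k _ => rfl

private lemma norm_t3_sq {n : ℕ} (u₁ u₂ u₃ : EuclideanSpace ℝ (Fin n)) :
    ‖t3 u₁ u₂ u₃‖^2 = ‖u₁‖^2 * ‖u₂‖^2 * ‖u₃‖^2 := by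
  rw [← real_inner_self_eq_norm_sq, inner_t3, real_inner_self_eq_norm_sq,
    real_inner_self_eq_norm_sq, real_inner_self_eq_norm_sq]

private lemma t3_smul {n : ℕ} (a b c : ℝ) (z₁ z₂ z₃ : EuclideanSpace ℝ (Fin n)) :
    t3 (a • z₁) (b • z₂) (c • z₃) = (a*b*c) • t3 z₁ z₂ z₃ := by
  ext i
  show (a • z₁) i.1 * (b • z₂) i.2.1 * (c • z₃) i.2.2 = ((a*b*c) • t3 z₁ z₂ z₃) i
  simp only [PiLp.smul_apply, smul_eq_mul, t3]
  ring

private lemma span_eq {n : ℕ} (p q u : EuclideanSpace ℝ (Fin n))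
    (hpp : (inner ℝ p p : ℝ) = 1) (hqq : (inner ℝ q q : ℝ) = 1) (hpq : (inner ℝ p q : ℝ) = 0)
    (h : (inner ℝ p u : ℝ)^2 + (inner ℝ q u : ℝ)^2 = ‖u‖^2) :
    u = (inner ℝ p u : ℝ) • p + (inner ℝ q u : ℝ) • q := by
  have hqp : (inner ℝ q p : ℝ) = 0 := by rw [real_inner_comm]; exact hpq
  have hd : ‖u - ((inner ℝ p u : ℝ) • p + (inner ℝ q u : ℝ) • q)‖^2
      = ‖u‖^2 - ((inner ℝ p u : ℝ)^2 + (inner ℝ q u : ℝ)^2) := by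
    rw [← real_inner_self_eq_norm_sq, ← real_inner_self_eq_norm_sq (x := u)]
    simp only [inner_sub_left, inner_sub_right, inner_add_left, inner_add_right,
      real_inner_smul_left, real_inner_smul_right, hpp, hqq, hpq, hqp]
    rw [real_inner_comm u p, real_inner_comm u q]
    ring
  have : ‖u - ((inner ℝ p u : ℝ) • p + (inner ℝ q u : ℝ) • q)‖^2 = 0 := by rw [hd, ← h]; ring
  have := pow_eq_zero_iff (two_ne_zero) |>.mp this
  have := norm_eq_zero.mp this
  rw [sub_eq_zero] at this
  exact this

private lemma bessel {n : ℕ} (p q u : EuclideanSpace ℝ (Fin n))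
    (hpp : (inner ℝ p p : ℝ) = 1) (hqq : (inner ℝ q q : ℝ) = 1) (hpq : (inner ℝ p q : ℝ) = 0) :
    (inner ℝ p u : ℝ)^2 + (inner ℝ q u : ℝ)^2 ≤ ‖u‖^2 := by
  have hqp : (inner ℝ q p : ℝ) = 0 := by rw [real_inner_comm]; exact hpq
  have hd : ‖u - ((inner ℝ p u : ℝ) • p + (inner ℝ q u : ℝ) • q)‖^2
      = ‖u‖^2 - ((inner ℝ p u : ℝ)^2 + (inner ℝ q u : ℝ)^2) := by
    rw [← real_inner_self_eq_norm_sq, ← real_inner_self_eq_norm_sq (x := u)]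
    simp only [inner_sub_left, inner_sub_right, inner_add_left, inner_add_right,
      real_inner_smul_left, real_inner_smul_right, hpp, hqq, hpq, hqp]
    rw [real_inner_comm u p, real_inner_comm u q]
    ring
  nlinarith [sq_nonneg ‖u - ((inner ℝ p u : ℝ) • p + (inner ℝ q u : ℝ) • q)‖]

private lemma inner_bLam {n : ℕ} (p q : EuclideanSpace ℝ (Fin n)) (lam : ℝ)
    (u₁ u₂ u₃ : EuclideanSpace ℝ (Fin n)) :
    (inner ℝ (bLam p q lam) (t3 u₁ u₂ u₃) : ℝ)
      = (inner ℝ p u₁ : ℝ) * (inner ℝ p u₂ : ℝ) * (inner ℝ p u₃ : ℝ)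
        + lam * ((inner ℝ p u₁ : ℝ) * (inner ℝ q u₂ : ℝ) * (inner ℝ q u₃ : ℝ)
          + (inner ℝ q u₁ : ℝ) * (inner ℝ p u₂ : ℝ) * (inner ℝ q u₃ : ℝ)
          + (inner ℝ q u₁ : ℝ) * (inner ℝ q u₂ : ℝ) * (inner ℝ p u₃ : ℝ)) := by
  unfold bLam
  rw [inner_add_left, real_inner_smul_left, inner_add_left, inner_add_left,
    inner_t3, inner_t3, inner_t3, inner_t3]

private lemma prod3_eq (s1 s2 s3 t1 t2 t3 : ℝ) (h1 : 0 ≤ s1) (h2 : 0 ≤ s2) (h3 : 0 ≤ s3)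
    (l1 : s1 ≤ t1) (l2 : s2 ≤ t2) (l3 : s3 ≤ t3)
    (ht : 0 < t1*(t2*t3)) (hp : s1*(s2*s3) = t1*(t2*t3)) :
    s1 = t1 ∧ s2 = t2 ∧ s3 = t3 := by
  have ht1 : 0 < t1 := by
    rcases (h1.trans l1).lt_or_eq with h | h
    · exact h
    · exfalso; rw [← h] at ht; simp at ht
  have ht2 : 0 < t2 := by
    rcases (h2.trans l2).lt_or_eq with h | h
    · exact h
    · exfalso; rw [← h] at ht; nlinarith
  have ht3 : 0 < t3 := by
    rcases (h3.trans l3).lt_or_eq with h | h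
    · exact h
    · exfalso; rw [← h] at ht; nlinarith
  have e1 : s1 = t1 := by
    have k1 : s2*s3 ≤ t2*t3 := mul_le_mul l2 l3 h3 (h2.trans l2)
    have k2 : t1*(t2*t3) ≤ s1*(t2*t3) := by nlinarith
    exact le_antisymm l1 (le_of_mul_le_mul_right k2 (mul_pos ht2 ht3))
  have e2 : s2 = t2 := by
    have k1 : s1*s3 ≤ t1*t3 := mul_le_mul l1 l3 h3 (h1.trans l1)
    have k2 : t2*(t1*t3) ≤ s2*(t1*t3) := by nlinarith
    exact le_antisymm l2 (le_of_mul_le_mul_right k2 (mul_pos ht1 ht3))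
  have e3 : s3 = t3 := by
    have k1 : s1*s2 ≤ t1*t2 := mul_le_mul l1 l2 h2 (h1.trans l1)
    have k2 : t3*(t1*t2) ≤ s3*(t1*t2) := by nlinarith
    exact le_antisymm l3 (le_of_mul_le_mul_right k2 (mul_pos ht1 ht2))
  exact ⟨e1, e2, e3⟩

private lemma Fsq_le {n : ℕ} (p q : EuclideanSpace ℝ (Fin n)) (lam m2 : ℝ)
    (hpp : (inner ℝ p p : ℝ) = 1) (hqq : (inner ℝ q q : ℝ) = 1) (hpq : (inner ℝ p q : ℝ) = 0)
    (hkey : ∀ a₂ b₂ a₃ b₃ : ℝ, (a₂*a₃ + lam*(b₂*b₃))^2 + (lam*(a₂*b₃ + b₂*a₃))^2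
      ≤ m2 * ((a₂^2+b₂^2)*(a₃^2+b₃^2)))
    (hm2 : 0 < m2) (u₁ u₂ u₃ : EuclideanSpace ℝ (Fin n)) :
    (inner ℝ (bLam p q lam) (t3 u₁ u₂ u₃) : ℝ)^2
      ≤ m2 * (‖u₁‖^2*(‖u₂‖^2*‖u₃‖^2)) := by
  have hF : (inner ℝ (bLam p q lam) (t3 u₁ u₂ u₃) : ℝ)
      = (inner ℝ p u₁ : ℝ) * ((inner ℝ p u₂ : ℝ)*(inner ℝ p u₃ : ℝ)
          + lam*((inner ℝ q u₂ : ℝ)*(inner ℝ q u₃ : ℝ)))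
        + (inner ℝ q u₁ : ℝ) * (lam*((inner ℝ p u₂ : ℝ)*(inner ℝ q u₃ : ℝ)
          + (inner ℝ q u₂ : ℝ)*(inner ℝ p u₃ : ℝ))) := by
    rw [inner_bLam]; ring
  set a₁ := (inner ℝ p u₁ : ℝ); set b₁ := (inner ℝ q u₁ : ℝ)
  set a₂ := (inner ℝ p u₂ : ℝ); set b₂ := (inner ℝ q u₂ : ℝ)
  set a₃ := (inner ℝ p u₃ : ℝ); set b₃ := (inner ℝ q u₃ : ℝ)
  have hb1 := bessel p q u₁ hpp hqq hpq
  have hb2 := bessel p q u₂ hpp hqq hpq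
  have hb3 := bessel p q u₃ hpp hqq hpq
  have k1 : (inner ℝ (bLam p q lam) (t3 u₁ u₂ u₃) : ℝ)^2
      ≤ (a₁^2+b₁^2) * ((a₂*a₃ + lam*(b₂*b₃))^2 + (lam*(a₂*b₃ + b₂*a₃))^2) := by
    rw [hF]
    nlinarith [sq_nonneg (a₁*(lam*(a₂*b₃ + b₂*a₃)) - b₁*(a₂*a₃ + lam*(b₂*b₃)))]
  have k2 := hkey a₂ b₂ a₃ b₃
  calc (inner ℝ (bLam p q lam) (t3 u₁ u₂ u₃) : ℝ)^2
      ≤ (a₁^2+b₁^2) * ((a₂*a₃ + lam*(b₂*b₃))^2 + (lam*(a₂*b₃ + b₂*a₃))^2) := k1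
    _ ≤ (a₁^2+b₁^2) * (m2 * ((a₂^2+b₂^2)*(a₃^2+b₃^2))) :=
        mul_le_mul_of_nonneg_left k2 (by positivity)
    _ = m2 * ((a₁^2+b₁^2)*((a₂^2+b₂^2)*(a₃^2+b₃^2))) := by ring
    _ ≤ m2 * (‖u₁‖^2*(‖u₂‖^2*‖u₃‖^2)) := by
        have n2 : (0:ℝ) ≤ ‖u₂‖^2 := by positivity
        have n3 : (0:ℝ) ≤ ‖u₃‖^2 := by positivity
        have hh : (a₁^2+b₁^2)*((a₂^2+b₂^2)*(a₃^2+b₃^2)) ≤ ‖u₁‖^2*(‖u₂‖^2*‖u₃‖^2) := by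
          have i23 : (a₂^2+b₂^2)*(a₃^2+b₃^2) ≤ ‖u₂‖^2*‖u₃‖^2 :=
            mul_le_mul hb2 hb3 (by positivity) n2
          exact mul_le_mul hb1 i23 (by positivity) (by positivity)
        exact mul_le_mul_of_nonneg_left hh hm2.le

/-- The set of rank-one order-3 tensors. -/
def rankOneSet (n : ℕ) : Set (EuclideanSpace ℝ (Fin n × Fin n × Fin n)) :=
  {v | ∃ (c : ℝ) (u₁ u₂ u₃ : EuclideanSpace ℝ (Fin n)), v = c • t3 u₁ u₂ u₃}

private lemma norm_sub_smul_sq {n : ℕ} (b T : EuclideanSpace ℝ (Fin n × Fin n × Fin n)) (c : ℝ) :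
    ‖b - c • T‖^2 = ‖b‖^2 - 2*(c*(inner ℝ b T : ℝ)) + c^2*‖T‖^2 := by
  rw [norm_sub_sq_real, real_inner_smul_right, norm_smul, Real.norm_eq_abs, mul_pow, sq_abs]

private lemma dist_lb {n : ℕ} (p q : EuclideanSpace ℝ (Fin n)) (lam m2 : ℝ)
    (hpp : (inner ℝ p p : ℝ) = 1) (hqq : (inner ℝ q q : ℝ) = 1) (hpq : (inner ℝ p q : ℝ) = 0)
    (hkey : ∀ a₂ b₂ a₃ b₃ : ℝ, (a₂*a₃ + lam*(b₂*b₃))^2 + (lam*(a₂*b₃ + b₂*a₃))^2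
      ≤ m2 * ((a₂^2+b₂^2)*(a₃^2+b₃^2)))
    (hm2 : 0 < m2) (w : EuclideanSpace ℝ (Fin n × Fin n × Fin n)) (hw : w ∈ rankOneSet n) :
    ‖bLam p q lam‖^2 - m2 ≤ ‖bLam p q lam - w‖^2 := by
  obtain ⟨c, u₁, u₂, u₃, rfl⟩ := hw
  rw [norm_sub_smul_sq, norm_t3_sq]
  have hF := Fsq_le p q lam m2 hpp hqq hpq hkey hm2 u₁ u₂ u₃
  nlinarith [sq_nonneg (c*(inner ℝ (bLam p q lam) (t3 u₁ u₂ u₃) : ℝ) - m2),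
    mul_nonneg (sq_nonneg c) (sub_nonneg.2 hF), hm2]

private lemma scalar_opt (m2 c F N : ℝ) (hm2 : 0 < m2)
    (eq1 : 2*(c*F) - c^2*N = m2) (hFN : F^2 ≤ m2*N) :
    c*F = m2 ∧ 0 < N ∧ F^2 = m2*N := by
  have hz : (m2 - c*F)^2 + c^2*(m2*N - F^2) = 0 := by linear_combination (-m2)*eq1
  have hcF : c*F = m2 := by
    have h1 : (m2 - c*F)^2 ≤ 0 := by nlinarith [mul_nonneg (sq_nonneg c) (sub_nonneg.2 hFN)]
    have h2 := pow_eq_zero_iff (two_ne_zero) |>.mp (le_antisymm h1 (sq_nonneg _))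
    linarith
  have eq2 : c^2*N = m2 := by
    have : 2*(c*F) = 2*m2 := by rw [hcF]
    linarith
  have hc0 : c ≠ 0 := by
    intro h; rw [h] at eq2; simp at eq2; rw [← eq2] at hm2; exact lt_irrefl 0 hm2
  have hN : 0 < N := by nlinarith [sq_nonneg c]
  refine ⟨hcF, hN, ?_⟩
  have hzz : c^2*(F^2 - m2*N) = 0 := by linear_combination (c*F + m2)*hcF - m2*eq2
  have := (mul_eq_zero.mp hzz).resolve_left (pow_ne_zero 2 hc0)
  linarith

set_option maxHeartbeats 2000000 in
private lemma equality_extract (lam m2 a₁ b₁ a₂ b₂ a₃ b₃ n1 n2 n3 F : ℝ)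
    (hm2 : 0 < m2)
    (hFexpr : F = a₁*(a₂*a₃ + lam*(b₂*b₃)) + b₁*(lam*(a₂*b₃ + b₂*a₃)))
    (k2 : (a₂*a₃ + lam*(b₂*b₃))^2 + (lam*(a₂*b₃ + b₂*a₃))^2 ≤ m2*((a₂^2+b₂^2)*(a₃^2+b₃^2)))
    (hb1 : a₁^2+b₁^2 ≤ n1) (hb2 : a₂^2+b₂^2 ≤ n2) (hb3 : a₃^2+b₃^2 ≤ n3)
    (hN : 0 < n1*(n2*n3)) (hF2 : F^2 = m2*(n1*(n2*n3))) :
    a₁^2+b₁^2 = n1 ∧ a₂^2+b₂^2 = n2 ∧ a₃^2+b₃^2 = n3 ∧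
    (0 < a₁^2+b₁^2) ∧ (0 < a₂^2+b₂^2) ∧ (0 < a₃^2+b₃^2) ∧
    ((a₂*a₃ + lam*(b₂*b₃))^2 + (lam*(a₂*b₃ + b₂*a₃))^2 = m2 * ((a₂^2+b₂^2)*(a₃^2+b₃^2))) ∧
    a₁*(lam*(a₂*b₃ + b₂*a₃)) = b₁*(a₂*a₃ + lam*(b₂*b₃)) := by
  have k1 : F^2 ≤ (a₁^2+b₁^2) * ((a₂*a₃ + lam*(b₂*b₃))^2 + (lam*(a₂*b₃ + b₂*a₃))^2) := by
    rw [hFexpr]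
    nlinarith [sq_nonneg (a₁*(lam*(a₂*b₃ + b₂*a₃)) - b₁*(a₂*a₃ + lam*(b₂*b₃)))]
  have cA : F^2 ≤ m2*((a₁^2+b₁^2)*((a₂^2+b₂^2)*(a₃^2+b₃^2))) := by
    nlinarith [mul_le_mul_of_nonneg_left k2 (by positivity : (0:ℝ) ≤ a₁^2+b₁^2)]
  have k3 : (a₁^2+b₁^2)*((a₂^2+b₂^2)*(a₃^2+b₃^2)) ≤ n1*(n2*n3) := by
    have i23 : (a₂^2+b₂^2)*(a₃^2+b₃^2) ≤ n2*n3 :=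
      mul_le_mul hb2 hb3 (by positivity) (le_trans (by positivity) hb2)
    exact mul_le_mul hb1 i23 (by positivity) ((by positivity : (0:ℝ) ≤ a₁^2+b₁^2).trans hb1)
  have e1 : (a₁^2+b₁^2)*((a₂^2+b₂^2)*(a₃^2+b₃^2)) = n1*(n2*n3) := by
    have cB : m2*((a₁^2+b₁^2)*((a₂^2+b₂^2)*(a₃^2+b₃^2))) ≤ m2*(n1*(n2*n3)) :=
      mul_le_mul_of_nonneg_left k3 hm2.le
    have low : m2*(n1*(n2*n3)) ≤ m2*((a₁^2+b₁^2)*((a₂^2+b₂^2)*(a₃^2+b₃^2))) := by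
      rw [← hF2]; exact cA
    exact mul_left_cancel₀ hm2.ne' (le_antisymm cB low)
  obtain ⟨es1, es2, es3⟩ := prod3_eq (a₁^2+b₁^2) (a₂^2+b₂^2) (a₃^2+b₃^2) n1 n2 n3 (by positivity) (by positivity) (by positivity)
    hb1 hb2 hb3 hN e1
  have hs1 : 0 < a₁^2+b₁^2 := by nlinarith [mul_nonneg (by positivity : (0:ℝ) ≤ a₂^2+b₂^2) (by positivity : (0:ℝ) ≤ a₃^2+b₃^2)]
  have hs2 : 0 < a₂^2+b₂^2 := by nlinarith [mul_nonneg (by positivity : (0:ℝ) ≤ a₁^2+b₁^2) (by positivity : (0:ℝ) ≤ a₃^2+b₃^2)]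
  have hs3 : 0 < a₃^2+b₃^2 := by nlinarith [mul_nonneg (by positivity : (0:ℝ) ≤ a₁^2+b₁^2) (by positivity : (0:ℝ) ≤ a₂^2+b₂^2)]
  have mid : (a₁^2+b₁^2) * ((a₂*a₃ + lam*(b₂*b₃))^2 + (lam*(a₂*b₃ + b₂*a₃))^2) = F^2 := by
    have up : (a₁^2+b₁^2) * ((a₂*a₃ + lam*(b₂*b₃))^2 + (lam*(a₂*b₃ + b₂*a₃))^2)
        ≤ m2*((a₁^2+b₁^2)*((a₂^2+b₂^2)*(a₃^2+b₃^2))) := by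
      nlinarith [mul_le_mul_of_nonneg_left k2 (by positivity : (0:ℝ) ≤ a₁^2+b₁^2)]
    have hFe : m2*((a₁^2+b₁^2)*((a₂^2+b₂^2)*(a₃^2+b₃^2))) = F^2 := by rw [e1, ← hF2]
    linarith
  have keq : (a₂*a₃ + lam*(b₂*b₃))^2 + (lam*(a₂*b₃ + b₂*a₃))^2
      = m2 * ((a₂^2+b₂^2)*(a₃^2+b₃^2)) := by
    have h' : (a₁^2+b₁^2) * ((a₂*a₃ + lam*(b₂*b₃))^2 + (lam*(a₂*b₃ + b₂*a₃))^2)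
        = (a₁^2+b₁^2) * (m2 * ((a₂^2+b₂^2)*(a₃^2+b₃^2))) := by
      rw [mid, hF2, ← e1]; ring
    exact mul_left_cancel₀ hs1.ne' h'
  have lag : a₁*(lam*(a₂*b₃ + b₂*a₃)) = b₁*(a₂*a₃ + lam*(b₂*b₃)) := by
    have hsq : (a₁*(lam*(a₂*b₃ + b₂*a₃)) - b₁*(a₂*a₃ + lam*(b₂*b₃)))^2 = 0 := by
      rw [hFexpr] at mid; linear_combination mid
    have := pow_eq_zero_iff (two_ne_zero) |>.mp hsq
    linarith
  exact ⟨es1, es2, es3, hs1, hs2, hs3, keq, lag⟩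

set_option maxHeartbeats 2000000 in
private lemma best_eq_data {n : ℕ} (p q : EuclideanSpace ℝ (Fin n)) (lam m2 : ℝ)
    (hpp : (inner ℝ p p : ℝ) = 1) (hqq : (inner ℝ q q : ℝ) = 1) (hpq : (inner ℝ p q : ℝ) = 0)
    (hkey : ∀ a₂ b₂ a₃ b₃ : ℝ, (a₂*a₃ + lam*(b₂*b₃))^2 + (lam*(a₂*b₃ + b₂*a₃))^2
      ≤ m2 * ((a₂^2+b₂^2)*(a₃^2+b₃^2)))
    (hm2 : 0 < m2) (c : ℝ) (u₁ u₂ u₃ : EuclideanSpace ℝ (Fin n))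
    (heq : ‖bLam p q lam - c • t3 u₁ u₂ u₃‖^2 = ‖bLam p q lam‖^2 - m2) :
    ∃ a₁ b₁ a₂ b₂ a₃ b₃ : ℝ,
      u₁ = a₁ • p + b₁ • q ∧ u₂ = a₂ • p + b₂ • q ∧ u₃ = a₃ • p + b₃ • q ∧
      0 < a₁^2+b₁^2 ∧ 0 < a₂^2+b₂^2 ∧ 0 < a₃^2+b₃^2 ∧
      (a₂*a₃ + lam*(b₂*b₃))^2 + (lam*(a₂*b₃ + b₂*a₃))^2 = m2 * ((a₂^2+b₂^2)*(a₃^2+b₃^2)) ∧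
      a₁*(lam*(a₂*b₃ + b₂*a₃)) = b₁*(a₂*a₃ + lam*(b₂*b₃)) ∧
      c*(a₁*(a₂*a₃ + lam*(b₂*b₃)) + b₁*(lam*(a₂*b₃ + b₂*a₃))) = m2 := by
  have eq1 : 2*(c*(inner ℝ (bLam p q lam) (t3 u₁ u₂ u₃) : ℝ))
      - c^2*(‖u₁‖^2*(‖u₂‖^2*‖u₃‖^2)) = m2 := by
    rw [norm_sub_smul_sq, norm_t3_sq] at heq
    nlinarith [heq]
  have hFN : (inner ℝ (bLam p q lam) (t3 u₁ u₂ u₃) : ℝ)^2 ≤ m2*(‖u₁‖^2*(‖u₂‖^2*‖u₃‖^2)) :=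
    Fsq_le p q lam m2 hpp hqq hpq hkey hm2 u₁ u₂ u₃
  obtain ⟨hcF, hN, hF2⟩ := scalar_opt m2 c _ _ hm2 eq1 hFN
  have hFexpr : (inner ℝ (bLam p q lam) (t3 u₁ u₂ u₃) : ℝ)
      = (inner ℝ p u₁ : ℝ)*((inner ℝ p u₂ : ℝ)*(inner ℝ p u₃ : ℝ)
            + lam*((inner ℝ q u₂ : ℝ)*(inner ℝ q u₃ : ℝ)))
        + (inner ℝ q u₁ : ℝ)*(lam*((inner ℝ p u₂ : ℝ)*(inner ℝ q u₃ : ℝ)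
            + (inner ℝ q u₂ : ℝ)*(inner ℝ p u₃ : ℝ))) := by
    rw [inner_bLam]; ring
  obtain ⟨es1, es2, es3, hs1, hs2, hs3, keq, lag⟩ :=
    equality_extract lam m2 (inner ℝ p u₁ : ℝ) (inner ℝ q u₁ : ℝ) (inner ℝ p u₂ : ℝ)
      (inner ℝ q u₂ : ℝ) (inner ℝ p u₃ : ℝ) (inner ℝ q u₃ : ℝ) (‖u₁‖^2) (‖u₂‖^2) (‖u₃‖^2) _
      hm2 hFexpr (hkey _ _ _ _) (bessel p q u₁ hpp hqq hpq) (bessel p q u₂ hpp hqq hpq)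
      (bessel p q u₃ hpp hqq hpq) hN hF2
  refine ⟨(inner ℝ p u₁ : ℝ), (inner ℝ q u₁ : ℝ), (inner ℝ p u₂ : ℝ), (inner ℝ q u₂ : ℝ),
    (inner ℝ p u₃ : ℝ), (inner ℝ q u₃ : ℝ),
    span_eq p q u₁ hpp hqq hpq es1, span_eq p q u₂ hpp hqq hpq es2,
    span_eq p q u₃ hpp hqq hpq es3, hs1, hs2, hs3, keq, lag, ?_⟩
  rw [← hFexpr]
  exact hcF

/-- The set of best rank-one approximations of `b`. -/
def bestSet {n : ℕ} (b : EuclideanSpace ℝ (Fin n × Fin n × Fin n)) :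
    Set (EuclideanSpace ℝ (Fin n × Fin n × Fin n)) :=
  {v | v ∈ rankOneSet n ∧ ∀ w ∈ rankOneSet n, ‖b - v‖ ≤ ‖b - w‖}

set_option maxHeartbeats 4000000 in
/-- If `λ ≤ 1/2` then `p⊗p⊗p` is the unique best rank-one approximation of `b_λ`;
if `λ > 1/2` there are exactly two best rank-one approximations, neither equal to
`p⊗p⊗p`, of the form `c (p ± √((2λ−1)/λ) q)^{⊗3}`. -/
theorem stmt13 {n : ℕ} (p q : EuclideanSpace ℝ (Fin n))
    (hp : ‖p‖ = 1) (hq : ‖q‖ = 1) (hpq : (inner ℝ p q : ℝ) = 0)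
    (lam : ℝ) (hlam : 0 ≤ lam) :
    (lam ≤ 1 / 2 → bestSet (bLam p q lam) = {t3 p p p}) ∧
      (1 / 2 < lam →
        ∃ c₁ c₂ : ℝ,
          bestSet (bLam p q lam)
              = {c₁ • t3 (p + Real.sqrt ((2 * lam - 1) / lam) • q)
                    (p + Real.sqrt ((2 * lam - 1) / lam) • q)
                    (p + Real.sqrt ((2 * lam - 1) / lam) • q),
                 c₂ • t3 (p - Real.sqrt ((2 * lam - 1) / lam) • q)
                    (p - Real.sqrt ((2 * lam - 1) / lam) • q)
                    (p - Real.sqrt ((2 * lam - 1) / lam) • q)} ∧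
            c₁ • t3 (p + Real.sqrt ((2 * lam - 1) / lam) • q)
                    (p + Real.sqrt ((2 * lam - 1) / lam) • q)
                    (p + Real.sqrt ((2 * lam - 1) / lam) • q)
              ≠ c₂ • t3 (p - Real.sqrt ((2 * lam - 1) / lam) • q)
                    (p - Real.sqrt ((2 * lam - 1) / lam) • q)
                    (p - Real.sqrt ((2 * lam - 1) / lam) • q) ∧
            t3 p p p ∉ bestSet (bLam p q lam)) := by
  have hpp : (inner ℝ p p : ℝ) = 1 := by
    rw [real_inner_self_eq_norm_sq, hp]; norm_num
  have hqq : (inner ℝ q q : ℝ) = 1 := by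
    rw [real_inner_self_eq_norm_sq, hq]; norm_num
  have hqp : (inner ℝ q p : ℝ) = 0 := by rw [real_inner_comm]; exact hpq
  -- facts about p⊗p⊗p
  have hFppp : (inner ℝ (bLam p q lam) (t3 p p p) : ℝ) = 1 := by
    rw [inner_bLam p q lam p p p, hpp, hqp]; ring
  have hNppp : ‖t3 p p p‖^2 = 1 := by
    rw [norm_t3_sq, hp]; norm_num
  have hppp_attain : ‖bLam p q lam - t3 p p p‖^2 = ‖bLam p q lam‖^2 - 1 := by
    have h1 : bLam p q lam - t3 p p p = bLam p q lam - (1:ℝ) • t3 p p p := by rw [one_smul]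
    rw [h1, norm_sub_smul_sq, hFppp, hNppp]; ring
  have hppp_mem : t3 p p p ∈ rankOneSet n := ⟨1, p, p, p, (one_smul ℝ _).symm⟩
  constructor
  · -- case lam ≤ 1/2
    intro hle
    have hm2 : (0:ℝ) < 1 := one_pos
    have hkey : ∀ a₂ b₂ a₃ b₃ : ℝ, (a₂*a₃ + lam*(b₂*b₃))^2 + (lam*(a₂*b₃ + b₂*a₃))^2
        ≤ 1 * ((a₂^2+b₂^2)*(a₃^2+b₃^2)) := by
      intro a₂ b₂ a₃ b₃
      rw [one_mul]
      exact keyA lam a₂ b₂ a₃ b₃ hlam hle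
    have hlb := fun w hw => dist_lb p q lam 1 hpp hqq hpq hkey hm2 w hw
    ext v
    simp only [Set.mem_singleton_iff]
    constructor
    · rintro ⟨⟨c, u₁, u₂, u₃, rfl⟩, hmin⟩
      have hle1 := hmin (t3 p p p) hppp_mem
      have hsq : ‖bLam p q lam - c • t3 u₁ u₂ u₃‖^2 ≤ ‖bLam p q lam‖^2 - 1 := by
        rw [← hppp_attain]
        exact pow_le_pow_left₀ (norm_nonneg _) hle1 2
      have heq2 : ‖bLam p q lam - c • t3 u₁ u₂ u₃‖^2 = ‖bLam p q lam‖^2 - 1 :=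
        le_antisymm hsq (hlb _ ⟨c, u₁, u₂, u₃, rfl⟩)
      obtain ⟨a₁, b₁, a₂, b₂, a₃, b₃, hu₁, hu₂, hu₃, hs1, hs2, hs3, keq, lag, hcF⟩ :=
        best_eq_data p q lam 1 hpp hqq hpq hkey hm2 c u₁ u₂ u₃ heq2
      rw [one_mul] at keq
      obtain ⟨hb₂, hb₃⟩ := keyA_eq lam a₂ b₂ a₃ b₃ hlam hle hs2 hs3 keq
      have ha₂ : a₂ ≠ 0 := by intro h; rw [h, hb₂] at hs2; simp at hs2
      have ha₃ : a₃ ≠ 0 := by intro h; rw [h, hb₃] at hs3; simp at hs3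
      rw [hb₂, hb₃] at lag hcF
      have hb₁ : b₁ = 0 := by
        have h0 : b₁*(a₂*a₃) = 0 := by linear_combination -lag
        rcases mul_eq_zero.mp h0 with h | h
        · exact h
        · exact absurd h (mul_ne_zero ha₂ ha₃)
      rw [hb₁] at hcF
      have hscal : c*(a₁*a₂*a₃) = 1 := by linear_combination hcF
      rw [hu₁, hu₂, hu₃, hb₁, hb₂, hb₃]
      simp only [zero_smul, add_zero]
      rw [t3_smul, smul_smul, hscal, one_smul]
    · rintro rfl
      exact ⟨hppp_mem, fun w hw => le_of_sq_le_sq' (norm_nonneg _) (norm_nonneg _)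
        (by rw [hppp_attain]; exact hlb w hw)⟩
  · -- case 1/2 < lam
    intro hl
    have hl0 : (0:ℝ) < lam := by linarith
    have h3l : (0:ℝ) < 3*lam - 1 := by linarith
    have h2l : (0:ℝ) < 2*lam - 1 := by linarith
    set α := Real.sqrt ((2 * lam - 1) / lam) with hαdef
    have hαsq : α^2 = (2*lam - 1)/lam := Real.sq_sqrt (by positivity)
    have hαpos : 0 < α := Real.sqrt_pos.mpr (by positivity)
    have hlb2 : lam*α^2 = 2*lam - 1 := by rw [hαsq]; field_simp
    set m2 := 4*lam^3/(3*lam - 1) with hm2def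
    have hm2 : 0 < m2 := by positivity
    have hm2' : (3*lam - 1)*m2 = 4*lam^3 := by rw [hm2def]; field_simp
    set c₁ := 2*lam^3/(3*lam - 1)^2 with hc₁def
    have hc₁pos : 0 < c₁ := by positivity
    have h62 : (6*lam - 2) ≠ 0 := by
      have : (0:ℝ) < 6*lam - 2 := by linarith
      exact this.ne'
    have h62c : (6*lam - 2)*c₁ = m2 := by rw [hc₁def, hm2def]; have h3' : lam*3 - 1 ≠ 0 := (by linarith); field_simp; ring
    have hkey : ∀ a₂ b₂ a₃ b₃ : ℝ, (a₂*a₃ + lam*(b₂*b₃))^2 + (lam*(a₂*b₃ + b₂*a₃))^2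
        ≤ m2 * ((a₂^2+b₂^2)*(a₃^2+b₃^2)) := by
      intro u v x y
      have h := keyB lam u v x y hl
      have h2 : (3*lam - 1)*(m2*((u^2+v^2)*(x^2+y^2))) = 4*lam^3*((u^2+v^2)*(x^2+y^2)) := by
        linear_combination ((u^2+v^2)*(x^2+y^2))*hm2'
      have h3 : (3*lam - 1)*((u*x + lam*(v*y))^2 + (lam*(u*y + v*x))^2)
          ≤ (3*lam - 1)*(m2*((u^2+v^2)*(x^2+y^2))) := by rw [h2]; exact h
      exact le_of_mul_le_mul_left h3 h3l
    have hdlb := fun w hw => dist_lb p q lam m2 hpp hqq hpq hkey hm2 w hw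
    set zp := p + α • q with hzp
    set zm := p - α • q with hzm
    have ipzp : (inner ℝ p zp : ℝ) = 1 := by
      rw [hzp, inner_add_right, real_inner_smul_right, hpp, hpq]; ring
    have iqzp : (inner ℝ q zp : ℝ) = α := by
      rw [hzp, inner_add_right, real_inner_smul_right, hqp, hqq]; ring
    have ipzm : (inner ℝ p zm : ℝ) = 1 := by
      rw [hzm, inner_sub_right, real_inner_smul_right, hpp, hpq]; ring
    have iqzm : (inner ℝ q zm : ℝ) = -α := by
      rw [hzm, inner_sub_right, real_inner_smul_right, hqp, hqq]; ring
    have Fzp : (inner ℝ (bLam p q lam) (t3 zp zp zp) : ℝ) = 6*lam - 2 := by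
      rw [inner_bLam p q lam zp zp zp, ipzp, iqzp]; linear_combination 3*hlb2
    have Fzm : (inner ℝ (bLam p q lam) (t3 zm zm zm) : ℝ) = 6*lam - 2 := by
      rw [inner_bLam p q lam zm zm zm, ipzm, iqzm]; linear_combination 3*hlb2
    have nzp : ‖zp‖^2 = 1 + α^2 := by
      rw [← real_inner_self_eq_norm_sq, hzp]
      simp only [inner_add_left, inner_add_right, real_inner_smul_left,
        real_inner_smul_right, hpp, hqq, hpq, hqp]
      ring
    have nzm : ‖zm‖^2 = 1 + α^2 := by
      rw [← real_inner_self_eq_norm_sq, hzm]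
      simp only [inner_sub_left, inner_sub_right, real_inner_smul_left,
        real_inner_smul_right, hpp, hqq, hpq, hqp]
      ring
    have hkeyval : 2*(c₁*(6*lam - 2)) - c₁^2*((1+α^2)*(1+α^2)*(1+α^2)) = m2 := by
      rw [hαsq, hc₁def, hm2def]
      have h3' : lam*3 - 1 ≠ 0 := by linarith
      field_simp
      ring
    have attp : ‖bLam p q lam - c₁ • t3 zp zp zp‖^2 = ‖bLam p q lam‖^2 - m2 := by
      rw [norm_sub_smul_sq, norm_t3_sq, Fzp, nzp]; linarith [hkeyval]
    have attm : ‖bLam p q lam - c₁ • t3 zm zm zm‖^2 = ‖bLam p q lam‖^2 - m2 := by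
      rw [norm_sub_smul_sq, norm_t3_sq, Fzm, nzm]; linarith [hkeyval]
    have memp : c₁ • t3 zp zp zp ∈ rankOneSet n := ⟨c₁, zp, zp, zp, rfl⟩
    have memm : c₁ • t3 zm zm zm ∈ rankOneSet n := ⟨c₁, zm, zm, zm, rfl⟩
    refine ⟨c₁, c₁, ?_, ?_, ?_⟩
    · -- set equality
      ext v
      simp only [Set.mem_insert_iff, Set.mem_singleton_iff]
      constructor
      · rintro ⟨⟨c, u₁, u₂, u₃, rfl⟩, hmin⟩
        have hle1 := hmin _ memp
        have hsq : ‖bLam p q lam - c • t3 u₁ u₂ u₃‖^2 ≤ ‖bLam p q lam‖^2 - m2 := by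
          rw [← attp]
          exact pow_le_pow_left₀ (norm_nonneg _) hle1 2
        have heq2 : ‖bLam p q lam - c • t3 u₁ u₂ u₃‖^2 = ‖bLam p q lam‖^2 - m2 :=
          le_antisymm hsq (hdlb _ ⟨c, u₁, u₂, u₃, rfl⟩)
        obtain ⟨a₁, b₁, a₂, b₂, a₃, b₃, hu₁, hu₂, hu₃, hs1, hs2, hs3, keq, lag, hcF⟩ :=
          best_eq_data p q lam m2 hpp hqq hpq hkey hm2 c u₁ u₂ u₃ heq2
        have heqB : (3*lam - 1) * ((a₂*a₃ + lam*(b₂*b₃))^2 + (lam*(a₂*b₃ + b₂*a₃))^2)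
            = 4*lam^3 * ((a₂^2+b₂^2)*(a₃^2+b₃^2)) := by
          linear_combination (3*lam - 1)*keq + ((a₂^2+b₂^2)*(a₃^2+b₃^2))*hm2'
        obtain ⟨β, hb₂, hb₃, hβ, ha₂, ha₃⟩ := keyB_eq lam a₂ b₂ a₃ b₃ hl hs2 hs3 heqB
        rw [hb₂, hb₃] at lag hcF
        have hb₁ : b₁ = β*a₁ := by
          have hz' : (2*lam*(a₂*a₃))*(β*a₁ - b₁) = 0 := by
            linear_combination lag + (b₁*(a₂*a₃))*hβ
          have hfac : (2*lam*(a₂*a₃)) ≠ 0 :=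
            mul_ne_zero (by positivity) (mul_ne_zero ha₂ ha₃)
          have := (mul_eq_zero.mp hz').resolve_left hfac
          linarith
        rw [hb₁] at hcF
        have hsc0 : (6*lam - 2)*(c*(a₁*(a₂*a₃))) = m2 := by
          linear_combination hcF - 3*(c*(a₁*(a₂*a₃)))*hβ
        have hscal : c*(a₁*(a₂*a₃)) = c₁ :=
          mul_left_cancel₀ h62 (hsc0.trans h62c.symm)
        have hββ : (β - α)*(β + α) = 0 := by
          have h' : lam*(β^2 - α^2) = 0 := by linear_combination hβ - hlb2
          have h'' := (mul_eq_zero.mp h').resolve_left hl0.ne'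
          linear_combination h''
        have huz : ∀ a : ℝ, a • p + (β*a) • q = a • (p + β • q) := by
          intro a
          rw [smul_add, smul_smul, mul_comm]
        rw [hu₁, hu₂, hu₃, hb₁, hb₂, hb₃, huz, huz, huz, t3_smul, smul_smul]
        have hc₁' : c*(a₁*a₂*a₃) = c₁ := by rw [← hscal]; ring
        rw [hc₁']
        rcases mul_eq_zero.mp hββ with h | h
        · left
          have hβα : β = α := by linarith [sub_eq_zero.mp h]
          rw [hβα, ← hzp]
        · right
          have hβα : β = -α := by linarith [add_eq_zero_iff_eq_neg.mp h]
          rw [hβα, neg_smul, ← sub_eq_add_neg, ← hzm]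
      · rintro (rfl | rfl)
        · exact ⟨memp, fun w hw => le_of_sq_le_sq' (norm_nonneg _) (norm_nonneg _)
            (by rw [attp]; exact hdlb w hw)⟩
        · exact ⟨memm, fun w hw => le_of_sq_le_sq' (norm_nonneg _) (norm_nonneg _)
            (by rw [attm]; exact hdlb w hw)⟩
    · -- distinctness
      intro h
      have h' := congrArg (fun t => (inner ℝ (t3 q p p) t : ℝ)) h
      simp only [real_inner_smul_right, inner_t3, ipzp, iqzp, ipzm, iqzm] at h'
      nlinarith only [mul_pos hc₁pos hαpos, h']
    · -- t3 p p p is not optimal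
      intro hmem
      have hle1 := hmem.2 _ memp
      have hsq : ‖bLam p q lam - t3 p p p‖^2 ≤ ‖bLam p q lam - c₁ • t3 zp zp zp‖^2 :=
        pow_le_pow_left₀ (norm_nonneg _) hle1 2
      rw [hppp_attain, attp] at hsq
      have hgt : 1 < m2 := by
        rw [hm2def, lt_div_iff₀ h3l]
        have key : (0:ℝ) < (2*lam - 1)*(2*lam - 1)*(lam + 1) :=
          mul_pos (mul_pos h2l h2l) (by linarith)
        nlinarith only [key]
      linarith
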